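/- Fix 0 < H < 1/2 and define D(x,h) = e^{-(x+h)^2} - e^{-x^2} and F(x) = ∫_ℝ |D(x,h)|^2 |h|^{2H-2} dh. Then there exists a constant C depending only on H such that F(x) ≤ C · min(1, |x|^{2H-2}) for all x ∈ ℝ. -/

import Mathlib

open MeasureTheory Real Set

-- Lipschitz bound for the Gaussian
lemma gauss_lip (a b : ℝ) : |Real.exp (-b ^ 2) - Real.exp (-a ^ 2)| ≤ 2 * |b - a| := by
  have key : ∀ u : ℝ, HasDerivAt (fun t : ℝ => Real.exp (-t ^ 2))
      (Real.exp (-u ^ 2) * (-(2 * u))) u := by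
    intro u
    have h1 : HasDerivAt (fun t : ℝ => -t ^ 2) (-(2 * u)) u := by
      simpa using (hasDerivAt_pow 2 u).fun_neg
    exact h1.exp
  have bound : ∀ u : ℝ, ‖Real.exp (-u ^ 2) * (-(2 * u))‖ ≤ 2 := by
    intro u
    rw [norm_mul]
    have h1 : ‖Real.exp (-u ^ 2)‖ = Real.exp (-u ^ 2) := by
      rw [Real.norm_eq_abs, abs_of_pos (Real.exp_pos _)]
    have h2 : ‖-(2 * u)‖ = 2 * |u| := by
      rw [norm_neg, Real.norm_eq_abs, abs_mul]; norm_num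
    rw [h1, h2]
    have h3 : |u| ≤ Real.exp (u ^ 2) := by
      have : u ^ 2 + 1 ≤ Real.exp (u ^ 2) := Real.add_one_le_exp _
      nlinarith [abs_nonneg u, sq_abs u, sq_nonneg (|u| - 1)]
    have h4 : Real.exp (-u ^ 2) * |u| ≤ 1 := by
      rw [Real.exp_neg]
      rw [inv_mul_le_iff₀ (Real.exp_pos _)]
      simpa using h3
    nlinarith [Real.exp_pos (-u ^ 2), abs_nonneg u]
  have := Convex.norm_image_sub_le_of_norm_hasDerivWithin_le
    (f := fun t : ℝ => Real.exp (-t ^ 2)) (f' := fun u => Real.exp (-u ^ 2) * (-(2 * u)))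
    (s := Set.univ) (fun u _ => (key u).hasDerivWithinAt) (fun u _ => bound u)
    convex_univ (Set.mem_univ a) (Set.mem_univ b)
  simpa [Real.norm_eq_abs] using this

lemma E1 (a r : ℝ) (ha : -1 < a) (hr : 0 < r) :
    IntegrableOn (fun h : ℝ => |h| ^ a) {h : ℝ | |h| ≤ r} volume ∧
    ∫ h in {h : ℝ | |h| ≤ r}, |h| ^ a = 2 * (r ^ (a + 1) / (a + 1)) := by
  have hset : {h : ℝ | |h| ≤ r} = Icc (-r) r := by ext y; simp [abs_le]
  have m : MeasurableEmbedding (Neg.neg : ℝ → ℝ) := (Homeomorph.neg ℝ).measurableEmbedding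
  have hIoc : IntegrableOn (fun h : ℝ => |h| ^ a) (Ioc 0 r) := by
    have h0 : IntervalIntegrable (fun x : ℝ => x ^ a) volume 0 r :=
      intervalIntegral.intervalIntegrable_rpow' ha
    rw [intervalIntegrable_iff_integrableOn_Ioc_of_le hr.le] at h0
    exact h0.congr_fun (fun x hx => by rw [abs_of_pos hx.1]) measurableSet_Ioc
  have hIcc0 : IntegrableOn (fun h : ℝ => |h| ^ a) (Icc 0 r) :=
    (integrableOn_Icc_iff_integrableOn_Ioc).mpr hIoc
  have hneg : IntegrableOn (fun h : ℝ => |h| ^ a) (Ico (-r) 0) := by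
    rw [← Measure.map_neg_eq_self (volume : Measure ℝ), m.integrableOn_map_iff]
    have hpre : (Neg.neg : ℝ → ℝ) ⁻¹' Ico (-r) 0 = Ioc 0 r := by
      ext y; simp only [mem_preimage, mem_Ico, mem_Ioc]; constructor <;> intro h <;>
        constructor <;> linarith [h.1, h.2]
    rw [hpre]
    exact hIoc.congr_fun (fun x _ => by simp [Function.comp, abs_neg]) measurableSet_Ioc
  have hunion : Ico (-r) 0 ∪ Icc 0 r = Icc (-r) r :=
    Ico_union_Icc_eq_Icc (by linarith) hr.le
  have hdisj : Disjoint (Ico (-r) 0) (Icc 0 r) := by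
    apply Set.disjoint_left.mpr
    rintro y ⟨_, hy2⟩ ⟨hy3, _⟩; exact absurd hy3 (not_le.mpr hy2)
  have hint : IntegrableOn (fun h : ℝ => |h| ^ a) (Icc (-r) r) := by
    rw [← hunion]; exact hneg.union hIcc0
  have hval_Ioc : ∫ h in Ioc 0 r, |h| ^ a = r ^ (a + 1) / (a + 1) := by
    have h1 : ∫ h in Ioc 0 r, |h| ^ a = ∫ h in Ioc 0 r, h ^ a :=
      setIntegral_congr_fun measurableSet_Ioc (fun x hx => by rw [abs_of_pos hx.1])
    rw [h1, ← intervalIntegral.integral_of_le hr.le, integral_rpow (Or.inl ha),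
      Real.zero_rpow (by linarith), sub_zero]
  have hval_neg : ∫ h in Ico (-r) 0, |h| ^ a = ∫ h in Ioc 0 r, |h| ^ a := by
    have heq := MeasurableEmbedding.setIntegral_map (μ := volume) m (fun h : ℝ => |h| ^ a) (Ico (-r) 0)
    rw [Measure.map_neg_eq_self (volume : Measure ℝ)] at heq
    rw [heq]
    have hpre : (Neg.neg : ℝ → ℝ) ⁻¹' Ico (-r) 0 = Ioc 0 r := by
      ext y; simp only [mem_preimage, mem_Ico, mem_Ioc]; constructor <;> intro h <;>
        constructor <;> linarith [h.1, h.2]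
    rw [hpre]
    exact setIntegral_congr_fun measurableSet_Ioc (fun x _ => by simp [abs_neg])
  constructor
  · rwa [hset]
  · rw [hset, ← hunion, setIntegral_union hdisj measurableSet_Icc hneg hIcc0,
      hval_neg, integral_Icc_eq_integral_Ioc, hval_Ioc]
    ring

lemma E2 (b r : ℝ) (hb : b < -1) (hr : 0 < r) :
    IntegrableOn (fun h : ℝ => |h| ^ b) (Iic (-r) ∪ Ioi r) volume ∧
    ∫ h in Iic (-r) ∪ Ioi r, |h| ^ b = 2 * (r ^ (b + 1) / (-(b + 1))) := by
  have m : MeasurableEmbedding (Neg.neg : ℝ → ℝ) := (Homeomorph.neg ℝ).measurableEmbedding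
  have hIoi : IntegrableOn (fun h : ℝ => |h| ^ b) (Ioi r) := by
    exact (integrableOn_Ioi_rpow_of_lt hb hr).congr_fun
      (fun x hx => by rw [abs_of_pos (hr.trans hx)]) measurableSet_Ioi
  have hpre : (Neg.neg : ℝ → ℝ) ⁻¹' Iic (-r) = Ici r := by
    ext y; simp only [mem_preimage, mem_Iic, mem_Ici]; constructor <;> intro h <;> linarith
  have hIic : IntegrableOn (fun h : ℝ => |h| ^ b) (Iic (-r)) := by
    rw [← Measure.map_neg_eq_self (volume : Measure ℝ), m.integrableOn_map_iff, hpre]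
    exact (integrableOn_Ici_iff_integrableOn_Ioi).mpr
      (hIoi.congr_fun (fun x _ => by simp [Function.comp, abs_neg]) measurableSet_Ioi)
  have hdisj : Disjoint (Iic (-r)) (Ioi r) := Iic_disjoint_Ioi (by linarith)
  have hval_Ioi : ∫ h in Ioi r, |h| ^ b = r ^ (b + 1) / (-(b + 1)) := by
    have h1 : ∫ h in Ioi r, |h| ^ b = ∫ h in Ioi r, h ^ b :=
      setIntegral_congr_fun measurableSet_Ioi (fun x hx => by rw [abs_of_pos (hr.trans hx)])
    rw [h1, integral_Ioi_rpow_of_lt hb hr, div_neg, neg_div]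
  have hval_Iic : ∫ h in Iic (-r), |h| ^ b = ∫ h in Ioi r, |h| ^ b := by
    have h1 : ∫ h in Iic (-r), |h| ^ b = ∫ h in Iic (-r), |(-h)| ^ b := by
      refine setIntegral_congr_fun measurableSet_Iic (fun x _ => by rw [abs_neg])
    rw [h1, integral_comp_neg_Iic (-r) (fun y : ℝ => |y| ^ b), neg_neg]
  constructor
  · exact hIic.union hIoi
  · rw [setIntegral_union hdisj measurableSet_Ioi hIic hIoi, hval_Iic, hval_Ioi]
    ring

lemma E3 (x : ℝ) :
    Integrable (fun h : ℝ => Real.exp (-2 * (x + h) ^ 2)) volume ∧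
    ∫ h : ℝ, Real.exp (-2 * (x + h) ^ 2) ≤ 2 := by
  have hg : Integrable (fun y : ℝ => Real.exp (-2 * y ^ 2)) volume :=
    integrable_exp_neg_mul_sq (by norm_num)
  constructor
  · exact hg.comp_add_left x
  · rw [integral_add_left_eq_self (fun y : ℝ => Real.exp (-2 * y ^ 2)) x,
      integral_gaussian 2]
    have h1 : Real.sqrt (π / 2) ≤ Real.sqrt 4 :=
      Real.sqrt_le_sqrt (by linarith [Real.pi_le_four])
    have h2 : Real.sqrt 4 = 2 := by
      rw [show (4 : ℝ) = 2 ^ 2 by norm_num, Real.sqrt_sq (by norm_num)]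
    linarith

lemma lint_ofReal_le {f : ℝ → ℝ} {T : Set ℝ} (hfi : IntegrableOn f T volume)
    (hf0 : ∀ h, 0 ≤ f h) {B : ℝ} (hB : ∫ h in T, f h ≤ B) :
    ∫⁻ h in T, ENNReal.ofReal (f h) ≤ ENNReal.ofReal B := by
  rw [← ofReal_integral_eq_lintegral_ofReal hfi (ae_of_all _ hf0)]
  exact ENNReal.ofReal_le_ofReal hB

set_option maxHeartbeats 1000000 in
/-- For `H ∈ (0,1/2)`, `D(x,h) = e^{-(x+h)²} - e^{-x²}` and
`F(x) = ∫ |D(x,h)|² |h|^{2H-2} dh`, one has `F(x) ≤ C · min(1, |x|^{2H-2})`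
(written as `(max 1 |x|)^{2H-2}` since `2H-2 < 0`). -/
theorem stmt6 (H : ℝ) (hH : H ∈ Set.Ioo (0 : ℝ) (1 / 2)) :
    ∃ C : ℝ, 0 < C ∧ ∀ x : ℝ,
      (∫⁻ h : ℝ, ENNReal.ofReal
          (|Real.exp (-(x + h) ^ 2) - Real.exp (-x ^ 2)| ^ 2 * |h| ^ (2 * H - 2)))
        ≤ ENNReal.ofReal (C * (max 1 |x|) ^ (2 * H - 2)) := by
  obtain ⟨hH1, hH2⟩ := hH
  have h12 : 0 < 1 - 2 * H := by linarith
  have hCpos : 0 < 16 / H + 48 / (1 - 2 * H) + 48 := by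
    have h1 := div_pos (show (0:ℝ) < 16 by norm_num) hH1
    have h2 := div_pos (show (0:ℝ) < 48 by norm_num) h12
    linarith
  refine ⟨16 / H + 48 / (1 - 2 * H) + 48, hCpos, fun x => ?_⟩
  set C := 16 / H + 48 / (1 - 2 * H) + 48 with hC
  -- general pointwise facts
  have hD2 : ∀ h : ℝ, |Real.exp (-(x + h) ^ 2) - Real.exp (-x ^ 2)| ≤ 2 := by
    intro h
    have e1 : Real.exp (-(x + h) ^ 2) ≤ 1 := by
      rw [← Real.exp_zero]; exact Real.exp_le_exp.mpr (by nlinarith [sq_nonneg (x + h)])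
    have e2 : Real.exp (-x ^ 2) ≤ 1 := by
      rw [← Real.exp_zero]; exact Real.exp_le_exp.mpr (by nlinarith [sq_nonneg x])
    rw [abs_sub_le_iff]
    constructor <;> linarith [Real.exp_pos (-(x + h) ^ 2), Real.exp_pos (-x ^ 2)]
  have hDh : ∀ h : ℝ, |Real.exp (-(x + h) ^ 2) - Real.exp (-x ^ 2)| ≤ 2 * |h| := by
    intro h
    have := gauss_lip x (x + h)
    simpa using this
  by_cases hx : |x| ≤ 2
  · -- small case
    set s : Set ℝ := {h : ℝ | |h| ≤ 1} with hsdef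
    have hs : MeasurableSet s := (isClosed_le continuous_abs continuous_const).measurableSet
    have piece1 : ∫⁻ h in s, ENNReal.ofReal
        (|Real.exp (-(x + h) ^ 2) - Real.exp (-x ^ 2)| ^ 2 * |h| ^ (2 * H - 2))
        ≤ ENNReal.ofReal 8 := by
      have pt1 : ∀ h : ℝ, |Real.exp (-(x + h) ^ 2) - Real.exp (-x ^ 2)| ^ 2 * |h| ^ (2 * H - 2)
          ≤ 4 * |h| ^ (2 * H) := by
        intro h
        by_cases h0 : h = 0
        · subst h0
          rw [abs_zero, Real.zero_rpow (by linarith), Real.zero_rpow (by linarith), mul_zero,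
            mul_zero]
        · have e1 : |Real.exp (-(x + h) ^ 2) - Real.exp (-x ^ 2)| ^ 2 ≤ (2 * |h|) ^ 2 :=
            pow_le_pow_left₀ (abs_nonneg _) (hDh h) 2
          have e2 : (2 * |h|) ^ 2 * |h| ^ (2 * H - 2) = 4 * |h| ^ (2 * H) := by
            have h3 : |h| ^ (2:ℕ) * |h| ^ (2 * H - 2) = |h| ^ (2 * H) := by
              rw [← Real.rpow_natCast |h| 2, ← Real.rpow_add (abs_pos.mpr h0)]
              norm_num
            calc (2 * |h|) ^ 2 * |h| ^ (2 * H - 2) = 4 * (|h| ^ (2:ℕ) * |h| ^ (2 * H - 2)) := by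
                  ring
              _ = 4 * |h| ^ (2 * H) := by rw [h3]
          calc |Real.exp (-(x + h) ^ 2) - Real.exp (-x ^ 2)| ^ 2 * |h| ^ (2 * H - 2)
              ≤ (2 * |h|) ^ 2 * |h| ^ (2 * H - 2) :=
                mul_le_mul_of_nonneg_right e1 (Real.rpow_nonneg (abs_nonneg _) _)
            _ = 4 * |h| ^ (2 * H) := e2
      calc ∫⁻ h in s, ENNReal.ofReal
            (|Real.exp (-(x + h) ^ 2) - Real.exp (-x ^ 2)| ^ 2 * |h| ^ (2 * H - 2))
          ≤ ∫⁻ h in s, ENNReal.ofReal (4 * |h| ^ (2 * H)) :=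
            setLIntegral_mono_ae' hs (ae_of_all _ fun h _ =>
              ENNReal.ofReal_le_ofReal (pt1 h))
        _ ≤ ENNReal.ofReal 8 := by
            refine lint_ofReal_le (T := s) ((E1 (2 * H) 1 (by linarith) one_pos).1.const_mul 4)
              (fun h => by positivity) ?_
            rw [integral_const_mul]
            have hv := (E1 (2 * H) 1 (by linarith) one_pos).2
            rw [hsdef, hv, Real.one_rpow]
            have : 1 / (2 * H + 1) ≤ 1 := by
              rw [div_le_one (by linarith)]; linarith
            linarith
    have piece2 : ∫⁻ h in sᶜ, ENNReal.ofReal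
        (|Real.exp (-(x + h) ^ 2) - Real.exp (-x ^ 2)| ^ 2 * |h| ^ (2 * H - 2))
        ≤ ENNReal.ofReal (8 / (1 - 2 * H)) := by
      have pt2 : ∀ h : ℝ, |Real.exp (-(x + h) ^ 2) - Real.exp (-x ^ 2)| ^ 2 * |h| ^ (2 * H - 2)
          ≤ 4 * |h| ^ (2 * H - 2) := by
        intro h
        have e1 : |Real.exp (-(x + h) ^ 2) - Real.exp (-x ^ 2)| ^ 2 ≤ 4 := by
          nlinarith [hD2 h, abs_nonneg (Real.exp (-(x + h) ^ 2) - Real.exp (-x ^ 2))]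
        exact mul_le_mul_of_nonneg_right e1 (Real.rpow_nonneg (abs_nonneg _) _)
      have hsub : sᶜ ⊆ Iic (-1) ∪ Ioi 1 := by
        intro y hy
        simp only [hsdef, mem_compl_iff, mem_setOf_eq, not_le] at hy
        rcases le_or_gt y 0 with hy0 | hy0
        · left; rw [mem_Iic]; rw [abs_of_nonpos hy0] at hy; linarith
        · right; rw [mem_Ioi]; rwa [abs_of_pos hy0] at hy
      calc ∫⁻ h in sᶜ, ENNReal.ofReal
            (|Real.exp (-(x + h) ^ 2) - Real.exp (-x ^ 2)| ^ 2 * |h| ^ (2 * H - 2))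
          ≤ ∫⁻ h in sᶜ, ENNReal.ofReal (4 * |h| ^ (2 * H - 2)) :=
            setLIntegral_mono_ae' hs.compl (ae_of_all _ fun h _ =>
              ENNReal.ofReal_le_ofReal (pt2 h))
        _ ≤ ∫⁻ h in Iic (-1) ∪ Ioi 1, ENNReal.ofReal (4 * |h| ^ (2 * H - 2)) :=
            lintegral_mono_set hsub
        _ ≤ ENNReal.ofReal (8 / (1 - 2 * H)) := by
            refine lint_ofReal_le ((E2 (2 * H - 2) 1 (by linarith) one_pos).1.const_mul 4)
              (fun h => by positivity) ?_
            rw [integral_const_mul, (E2 (2 * H - 2) 1 (by linarith) one_pos).2, Real.one_rpow]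
            rw [show -(2 * H - 2 + 1) = 1 - 2 * H by ring]
            exact le_of_eq (by ring)
    have hm1 : (1:ℝ) ≤ max 1 |x| := le_max_left _ _
    have hm2 : max 1 |x| ≤ 2 := max_le (by norm_num) hx
    have hq : (1:ℝ) / 4 ≤ (max 1 |x|) ^ (2 * H - 2) := by
      have e1 : (2:ℝ) ^ (2 * H - 2) ≤ (max 1 |x|) ^ (2 * H - 2) :=
        Real.rpow_le_rpow_of_nonpos (by linarith) hm2 (by linarith)
      have e2 : (2:ℝ) ^ (-2:ℝ) ≤ (2:ℝ) ^ (2 * H - 2) :=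
        Real.rpow_le_rpow_of_exponent_le (by norm_num) (by linarith)
      have e3 : (2:ℝ) ^ (-2:ℝ) = 1 / 4 := by
        rw [show (-2:ℝ) = ((-2 : ℤ) : ℝ) by norm_num, Real.rpow_intCast]
        norm_num
      rw [← e3]
      exact e2.trans e1
    calc (∫⁻ h : ℝ, ENNReal.ofReal
          (|Real.exp (-(x + h) ^ 2) - Real.exp (-x ^ 2)| ^ 2 * |h| ^ (2 * H - 2)))
        = (∫⁻ h in s, ENNReal.ofReal
            (|Real.exp (-(x + h) ^ 2) - Real.exp (-x ^ 2)| ^ 2 * |h| ^ (2 * H - 2)))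
          + ∫⁻ h in sᶜ, ENNReal.ofReal
            (|Real.exp (-(x + h) ^ 2) - Real.exp (-x ^ 2)| ^ 2 * |h| ^ (2 * H - 2)) :=
          (lintegral_add_compl _ hs).symm
      _ ≤ ENNReal.ofReal 8 + ENNReal.ofReal (8 / (1 - 2 * H)) := add_le_add piece1 piece2
      _ = ENNReal.ofReal (8 + 8 / (1 - 2 * H)) := by
          rw [← ENNReal.ofReal_add (by norm_num) (by positivity)]
      _ ≤ ENNReal.ofReal (C * (max 1 |x|) ^ (2 * H - 2)) := by
          apply ENNReal.ofReal_le_ofReal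
          have key : C * (1 / 4) ≤ C * ((max 1 |x|) ^ (2 * H - 2)) :=
            mul_le_mul_of_nonneg_left hq hCpos.le
          have h1 := div_pos (show (0:ℝ) < 16 by norm_num) hH1
          have h2 := div_pos (show (0:ℝ) < 8 by norm_num) h12
          have h3 : 48 / (1 - 2 * H) = 6 * (8 / (1 - 2 * H)) := by ring
          linarith [key, h1, h2]
  · -- large case
    push_neg at hx
    have hx2 : (2:ℝ) ≤ |x| := hx.le
    set r : ℝ := |x| / 2 with hrdef
    have hr : 0 < r := by rw [hrdef]; linarith
    have hr1 : 1 ≤ r := by rw [hrdef]; linarith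
    have hxp : (0:ℝ) < |x| := by linarith
    set s : Set ℝ := {h : ℝ | |h| ≤ r} with hsdef
    have hs : MeasurableSet s := (isClosed_le continuous_abs continuous_const).measurableSet
    have h24 : (1:ℝ)/4 ≤ (2:ℝ) ^ (2 * H - 2) := by
      have e2 : (2:ℝ) ^ (-2:ℝ) ≤ (2:ℝ) ^ (2 * H - 2) :=
        Real.rpow_le_rpow_of_exponent_le (by norm_num) (by linarith)
      have e3 : (2:ℝ) ^ (-2:ℝ) = 1 / 4 := by
        rw [show (-2:ℝ) = ((-2 : ℤ) : ℝ) by norm_num, Real.rpow_intCast]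
        norm_num
      rw [e3] at e2; exact e2
    have hp_le : r ^ (2 * H - 2) ≤ 4 * |x| ^ (2 * H - 2) := by
      rw [hrdef, Real.div_rpow (abs_nonneg x) (by norm_num : (0:ℝ) ≤ 2)]
      rw [div_le_iff₀ (by positivity : (0:ℝ) < (2:ℝ) ^ (2 * H - 2))]
      have := mul_le_mul_of_nonneg_left h24 (Real.rpow_nonneg (abs_nonneg x) (2 * H - 2))
      nlinarith [Real.rpow_nonneg (abs_nonneg x) (2 * H - 2)]
    have pa : ∀ h ∈ s, |Real.exp (-(x + h) ^ 2) - Real.exp (-x ^ 2)|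
        ≤ 2 * Real.exp (-(x ^ 2 / 4)) := by
      intro h hh
      simp only [hsdef, mem_setOf_eq] at hh
      have habs : |x| ≤ |x + h| + |h| := by
        have h1 : |(x + h) + -h| ≤ |x + h| + |-h| := abs_add_le _ _
        simpa [abs_neg] using h1
      have h2 : |x| / 2 ≤ |x + h| := by rw [hrdef] at hh; linarith
      have h3 : x ^ 2 / 4 ≤ (x + h) ^ 2 := by
        nlinarith [sq_abs (x + h), sq_abs x, abs_nonneg (x + h), abs_nonneg x]
      have e1 : Real.exp (-(x + h) ^ 2) ≤ Real.exp (-(x ^ 2 / 4)) :=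
        Real.exp_le_exp.mpr (by linarith)
      have e2 : Real.exp (-x ^ 2) ≤ Real.exp (-(x ^ 2 / 4)) :=
        Real.exp_le_exp.mpr (by nlinarith [sq_nonneg x])
      rw [abs_sub_le_iff]
      constructor <;>
        linarith [Real.exp_pos (-(x + h) ^ 2), Real.exp_pos (-x ^ 2),
          Real.exp_pos (-(x ^ 2 / 4))]
    have pt_s : ∀ h ∈ s, |Real.exp (-(x + h) ^ 2) - Real.exp (-x ^ 2)| ^ 2 * |h| ^ (2 * H - 2)
        ≤ 4 * Real.exp (-(x ^ 2 / 4)) * |h| ^ (2 * H - 1) := by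
      intro h hh
      by_cases h0 : h = 0
      · subst h0
        rw [abs_zero, Real.zero_rpow (by linarith), Real.zero_rpow (by linarith), mul_zero,
          mul_zero]
      · have e1 : |Real.exp (-(x + h) ^ 2) - Real.exp (-x ^ 2)| ^ 2
            ≤ (2 * |h|) * (2 * Real.exp (-(x ^ 2 / 4))) := by
          have := mul_le_mul (hDh h) (pa h hh) (abs_nonneg _) (by positivity)
          calc |Real.exp (-(x + h) ^ 2) - Real.exp (-x ^ 2)| ^ 2
              = |Real.exp (-(x + h) ^ 2) - Real.exp (-x ^ 2)|
                * |Real.exp (-(x + h) ^ 2) - Real.exp (-x ^ 2)| := sq _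
            _ ≤ (2 * |h|) * (2 * Real.exp (-(x ^ 2 / 4))) := this
        have e2 : |h| * |h| ^ (2 * H - 2) = |h| ^ (2 * H - 1) := by
          rw [show (2 * H - 1) = 1 + (2 * H - 2) by ring, Real.rpow_add (abs_pos.mpr h0),
            Real.rpow_one]
        calc |Real.exp (-(x + h) ^ 2) - Real.exp (-x ^ 2)| ^ 2 * |h| ^ (2 * H - 2)
            ≤ (2 * |h|) * (2 * Real.exp (-(x ^ 2 / 4))) * |h| ^ (2 * H - 2) :=
              mul_le_mul_of_nonneg_right e1 (Real.rpow_nonneg (abs_nonneg _) _)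
          _ = 4 * Real.exp (-(x ^ 2 / 4)) * (|h| * |h| ^ (2 * H - 2)) := by ring
          _ = 4 * Real.exp (-(x ^ 2 / 4)) * |h| ^ (2 * H - 1) := by rw [e2]
    have piece1 : ∫⁻ h in s, ENNReal.ofReal
        (|Real.exp (-(x + h) ^ 2) - Real.exp (-x ^ 2)| ^ 2 * |h| ^ (2 * H - 2))
        ≤ ENNReal.ofReal (16 / H * |x| ^ (2 * H - 2)) := by
      calc ∫⁻ h in s, ENNReal.ofReal
            (|Real.exp (-(x + h) ^ 2) - Real.exp (-x ^ 2)| ^ 2 * |h| ^ (2 * H - 2))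
          ≤ ∫⁻ h in s, ENNReal.ofReal
            (4 * Real.exp (-(x ^ 2 / 4)) * |h| ^ (2 * H - 1)) :=
            setLIntegral_mono_ae' hs (ae_of_all _ fun h hh =>
              ENNReal.ofReal_le_ofReal (pt_s h hh))
        _ ≤ ENNReal.ofReal (16 / H * |x| ^ (2 * H - 2)) := by
            refine lint_ofReal_le
              ((E1 (2 * H - 1) r (by linarith) hr).1.const_mul (4 * Real.exp (-(x ^ 2 / 4))))
              (fun h => by positivity) ?_
            rw [integral_const_mul, (E1 (2 * H - 1) r (by linarith) hr).2,
              show 2 * H - 1 + 1 = 2 * H by ring]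
            have hsplit : r ^ (2 * H) = r ^ (2 * H - 2) * (r * r) := by
              rw [show 2 * H = 2 * H - 2 + 1 + 1 by ring, Real.rpow_add hr (2 * H - 2 + 1) 1,
                Real.rpow_add hr (2 * H - 2) 1, Real.rpow_one]
              ring
            have hrr : r * r = x ^ 2 / 4 := by
              rw [hrdef, div_mul_div_comm, abs_mul_abs_self]; ring
            have hexp : Real.exp (-(x ^ 2 / 4)) * (x ^ 2 / 4) ≤ 1 := by
              have hu := Real.add_one_le_exp (x ^ 2 / 4)
              have hprod : Real.exp (-(x ^ 2 / 4)) * Real.exp (x ^ 2 / 4) = 1 := by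
                rw [← Real.exp_add]; simp
              nlinarith [Real.exp_pos (-(x ^ 2 / 4)), Real.exp_pos (x ^ 2 / 4)]
            have c1 : 4 * Real.exp (-(x ^ 2 / 4)) * (2 * (r ^ (2 * H) / (2 * H)))
                = 4 / H * (Real.exp (-(x ^ 2 / 4)) * (x ^ 2 / 4)) * r ^ (2 * H - 2) := by
              rw [hsplit, hrr]; field_simp
            rw [c1]
            have c2 : 4 / H * (Real.exp (-(x ^ 2 / 4)) * (x ^ 2 / 4)) * r ^ (2 * H - 2)
                ≤ 4 / H * 1 * r ^ (2 * H - 2) :=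
              mul_le_mul_of_nonneg_right
                (mul_le_mul_of_nonneg_left hexp (by positivity))
                (Real.rpow_nonneg hr.le _)
            have c3 : 4 / H * 1 * r ^ (2 * H - 2) ≤ 4 / H * (4 * |x| ^ (2 * H - 2)) := by
              rw [mul_one]
              exact mul_le_mul_of_nonneg_left hp_le (by positivity)
            calc 4 / H * (Real.exp (-(x ^ 2 / 4)) * (x ^ 2 / 4)) * r ^ (2 * H - 2)
                ≤ 4 / H * 1 * r ^ (2 * H - 2) := c2
              _ ≤ 4 / H * (4 * |x| ^ (2 * H - 2)) := c3
              _ = 16 / H * |x| ^ (2 * H - 2) := by ring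
    have hsub : sᶜ ⊆ Iic (-r) ∪ Ioi r := by
      intro y hy
      simp only [hsdef, mem_compl_iff, mem_setOf_eq, not_le] at hy
      rcases le_or_gt y 0 with hy0 | hy0
      · left; rw [mem_Iic]; rw [abs_of_nonpos hy0] at hy; linarith
      · right; rw [mem_Ioi]; rwa [abs_of_pos hy0] at hy
    have pt_c : ∀ h ∈ sᶜ, ENNReal.ofReal
        (|Real.exp (-(x + h) ^ 2) - Real.exp (-x ^ 2)| ^ 2 * |h| ^ (2 * H - 2))
        ≤ ENNReal.ofReal (2 * r ^ (2 * H - 2) * Real.exp (-2 * (x + h) ^ 2))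
          + ENNReal.ofReal (2 * Real.exp (-2 * x ^ 2) * |h| ^ (2 * H - 2)) := by
      intro h hh
      simp only [hsdef, mem_compl_iff, mem_setOf_eq, not_le] at hh
      rw [← ENNReal.ofReal_add (by positivity) (by positivity)]
      apply ENNReal.ofReal_le_ofReal
      have hsq1 : Real.exp (-(x + h) ^ 2) ^ 2 = Real.exp (-2 * (x + h) ^ 2) := by
        rw [pow_two, ← Real.exp_add]; congr 1; ring
      have hsq2 : Real.exp (-x ^ 2) ^ 2 = Real.exp (-2 * x ^ 2) := by
        rw [pow_two, ← Real.exp_add]; congr 1; ring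
      have hD2' : |Real.exp (-(x + h) ^ 2) - Real.exp (-x ^ 2)| ^ 2
          ≤ 2 * Real.exp (-2 * (x + h) ^ 2) + 2 * Real.exp (-2 * x ^ 2) := by
        rw [sq_abs]
        nlinarith [sq_nonneg (Real.exp (-(x + h) ^ 2) + Real.exp (-x ^ 2)), hsq1, hsq2]
      have hmono : |h| ^ (2 * H - 2) ≤ r ^ (2 * H - 2) :=
        Real.rpow_le_rpow_of_nonpos hr hh.le (by linarith)
      have hrn : (0:ℝ) ≤ |h| ^ (2 * H - 2) := Real.rpow_nonneg (abs_nonneg _) _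
      calc |Real.exp (-(x + h) ^ 2) - Real.exp (-x ^ 2)| ^ 2 * |h| ^ (2 * H - 2)
          ≤ (2 * Real.exp (-2 * (x + h) ^ 2) + 2 * Real.exp (-2 * x ^ 2))
            * |h| ^ (2 * H - 2) := mul_le_mul_of_nonneg_right hD2' hrn
        _ = 2 * Real.exp (-2 * (x + h) ^ 2) * |h| ^ (2 * H - 2)
            + 2 * Real.exp (-2 * x ^ 2) * |h| ^ (2 * H - 2) := by ring
        _ ≤ 2 * r ^ (2 * H - 2) * Real.exp (-2 * (x + h) ^ 2)
            + 2 * Real.exp (-2 * x ^ 2) * |h| ^ (2 * H - 2) := by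
            have h1 : 2 * Real.exp (-2 * (x + h) ^ 2) * |h| ^ (2 * H - 2)
                ≤ 2 * r ^ (2 * H - 2) * Real.exp (-2 * (x + h) ^ 2) := by
              nlinarith [Real.exp_pos (-2 * (x + h) ^ 2), hmono, hrn]
            linarith
    have meas1 : Measurable fun h : ℝ =>
        ENNReal.ofReal (2 * r ^ (2 * H - 2) * Real.exp (-2 * (x + h) ^ 2)) := by
      fun_prop
    have part1 : ∫⁻ h in sᶜ,
        ENNReal.ofReal (2 * r ^ (2 * H - 2) * Real.exp (-2 * (x + h) ^ 2))
        ≤ ENNReal.ofReal (16 * |x| ^ (2 * H - 2)) := by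
      calc ∫⁻ h in sᶜ, ENNReal.ofReal (2 * r ^ (2 * H - 2) * Real.exp (-2 * (x + h) ^ 2))
          ≤ ∫⁻ h, ENNReal.ofReal (2 * r ^ (2 * H - 2) * Real.exp (-2 * (x + h) ^ 2)) :=
            setLIntegral_le_lintegral _ _
        _ = ENNReal.ofReal (∫ h, 2 * r ^ (2 * H - 2) * Real.exp (-2 * (x + h) ^ 2)) :=
            (ofReal_integral_eq_lintegral_ofReal ((E3 x).1.const_mul _)
              (ae_of_all _ fun h => by positivity)).symm
        _ ≤ ENNReal.ofReal (16 * |x| ^ (2 * H - 2)) := by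
            apply ENNReal.ofReal_le_ofReal
            rw [integral_const_mul]
            have h2 := (E3 x).2
            have hrp : (0:ℝ) ≤ r ^ (2 * H - 2) := Real.rpow_nonneg hr.le _
            nlinarith [hp_le]
    have part2 : ∫⁻ h in sᶜ,
        ENNReal.ofReal (2 * Real.exp (-2 * x ^ 2) * |h| ^ (2 * H - 2))
        ≤ ENNReal.ofReal (8 / (1 - 2 * H) * |x| ^ (2 * H - 2)) := by
      calc ∫⁻ h in sᶜ, ENNReal.ofReal (2 * Real.exp (-2 * x ^ 2) * |h| ^ (2 * H - 2))
          ≤ ∫⁻ h in Iic (-r) ∪ Ioi r,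
            ENNReal.ofReal (2 * Real.exp (-2 * x ^ 2) * |h| ^ (2 * H - 2)) :=
            lintegral_mono_set hsub
        _ ≤ ENNReal.ofReal (8 / (1 - 2 * H) * |x| ^ (2 * H - 2)) := by
            refine lint_ofReal_le
              ((E2 (2 * H - 2) r (by linarith) hr).1.const_mul (2 * Real.exp (-2 * x ^ 2)))
              (fun h => by positivity) ?_
            rw [integral_const_mul, (E2 (2 * H - 2) r (by linarith) hr).2,
              show -(2 * H - 2 + 1) = 1 - 2 * H by ring,
              show 2 * H - 2 + 1 = 2 * H - 1 by ring]
            have hsplit2 : r ^ (2 * H - 1) = r ^ (2 * H - 2) * r := by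
              rw [show 2 * H - 1 = (2 * H - 2) + 1 by ring, Real.rpow_add hr, Real.rpow_one]
            have hex : Real.exp (-2 * x ^ 2) * |x| ≤ 1 := by
              have hu := Real.add_one_le_exp (2 * x ^ 2)
              have hprod : Real.exp (-2 * x ^ 2) * Real.exp (2 * x ^ 2) = 1 := by
                rw [← Real.exp_add]; ring_nf; exact Real.exp_zero
              nlinarith [Real.exp_pos (-2 * x ^ 2), Real.exp_pos (2 * x ^ 2), sq_abs x,
                abs_nonneg x, sq_nonneg (|x| - 1)]
            have c1 : 2 * Real.exp (-2 * x ^ 2) * (2 * (r ^ (2 * H - 1) / (1 - 2 * H)))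
                = 4 / (1 - 2 * H) * (Real.exp (-2 * x ^ 2) * r) * r ^ (2 * H - 2) := by
              rw [hsplit2]; field_simp; ring
            rw [c1]
            have hexr : Real.exp (-2 * x ^ 2) * r ≤ 1 / 2 := by
              have : Real.exp (-2 * x ^ 2) * r = Real.exp (-2 * x ^ 2) * |x| / 2 := by
                rw [hrdef]; ring
              linarith
            have c2 : 4 / (1 - 2 * H) * (Real.exp (-2 * x ^ 2) * r) * r ^ (2 * H - 2)
                ≤ 4 / (1 - 2 * H) * (1 / 2) * r ^ (2 * H - 2) :=
              mul_le_mul_of_nonneg_right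
                (mul_le_mul_of_nonneg_left hexr (by positivity))
                (Real.rpow_nonneg hr.le _)
            have c3 : 4 / (1 - 2 * H) * (1 / 2) * r ^ (2 * H - 2)
                ≤ 4 / (1 - 2 * H) * (1 / 2) * (4 * |x| ^ (2 * H - 2)) :=
              mul_le_mul_of_nonneg_left hp_le (by positivity)
            calc 4 / (1 - 2 * H) * (Real.exp (-2 * x ^ 2) * r) * r ^ (2 * H - 2)
                ≤ 4 / (1 - 2 * H) * (1 / 2) * r ^ (2 * H - 2) := c2
              _ ≤ 4 / (1 - 2 * H) * (1 / 2) * (4 * |x| ^ (2 * H - 2)) := c3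
              _ = 8 / (1 - 2 * H) * |x| ^ (2 * H - 2) := by ring
    have piece2 : ∫⁻ h in sᶜ, ENNReal.ofReal
        (|Real.exp (-(x + h) ^ 2) - Real.exp (-x ^ 2)| ^ 2 * |h| ^ (2 * H - 2))
        ≤ ENNReal.ofReal (16 * |x| ^ (2 * H - 2))
          + ENNReal.ofReal (8 / (1 - 2 * H) * |x| ^ (2 * H - 2)) := by
      calc ∫⁻ h in sᶜ, ENNReal.ofReal
            (|Real.exp (-(x + h) ^ 2) - Real.exp (-x ^ 2)| ^ 2 * |h| ^ (2 * H - 2))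
          ≤ ∫⁻ h in sᶜ,
            (ENNReal.ofReal (2 * r ^ (2 * H - 2) * Real.exp (-2 * (x + h) ^ 2))
              + ENNReal.ofReal (2 * Real.exp (-2 * x ^ 2) * |h| ^ (2 * H - 2))) :=
            setLIntegral_mono_ae' hs.compl (ae_of_all _ fun h hh => pt_c h hh)
        _ = (∫⁻ h in sᶜ,
              ENNReal.ofReal (2 * r ^ (2 * H - 2) * Real.exp (-2 * (x + h) ^ 2)))
            + ∫⁻ h in sᶜ,
              ENNReal.ofReal (2 * Real.exp (-2 * x ^ 2) * |h| ^ (2 * H - 2)) :=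
            lintegral_add_left meas1 _
        _ ≤ _ := add_le_add part1 part2
    have hmax : max 1 |x| = |x| := max_eq_right (by linarith)
    have hxq : (0:ℝ) ≤ |x| ^ (2 * H - 2) := Real.rpow_nonneg (abs_nonneg x) _
    calc (∫⁻ h : ℝ, ENNReal.ofReal
          (|Real.exp (-(x + h) ^ 2) - Real.exp (-x ^ 2)| ^ 2 * |h| ^ (2 * H - 2)))
        = (∫⁻ h in s, ENNReal.ofReal
            (|Real.exp (-(x + h) ^ 2) - Real.exp (-x ^ 2)| ^ 2 * |h| ^ (2 * H - 2)))
          + ∫⁻ h in sᶜ, ENNReal.ofReal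
            (|Real.exp (-(x + h) ^ 2) - Real.exp (-x ^ 2)| ^ 2 * |h| ^ (2 * H - 2)) :=
          (lintegral_add_compl _ hs).symm
      _ ≤ ENNReal.ofReal (16 / H * |x| ^ (2 * H - 2))
          + (ENNReal.ofReal (16 * |x| ^ (2 * H - 2))
            + ENNReal.ofReal (8 / (1 - 2 * H) * |x| ^ (2 * H - 2))) :=
          add_le_add piece1 piece2
      _ = ENNReal.ofReal (16 / H * |x| ^ (2 * H - 2) + (16 * |x| ^ (2 * H - 2)
            + 8 / (1 - 2 * H) * |x| ^ (2 * H - 2))) := by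
          rw [← ENNReal.ofReal_add (by positivity) (by positivity),
            ← ENNReal.ofReal_add (by positivity) (by positivity)]
      _ ≤ ENNReal.ofReal (C * (max 1 |x|) ^ (2 * H - 2)) := by
          apply ENNReal.ofReal_le_ofReal
          rw [hmax]
          have hcoef : 16 / H * |x| ^ (2 * H - 2) + (16 * |x| ^ (2 * H - 2)
              + 8 / (1 - 2 * H) * |x| ^ (2 * H - 2))
              = (16 / H + 8 / (1 - 2 * H) + 16) * |x| ^ (2 * H - 2) := by ring
          rw [hcoef]
          apply mul_le_mul_of_nonneg_right ?_ hxq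
          have h1 := div_pos (show (0:ℝ) < 8 by norm_num) h12
          have h2 : 48 / (1 - 2 * H) = 6 * (8 / (1 - 2 * H)) := by ring
          linarith
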